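/- Let G be a signed graph in which every adjacency is negative, and let c, c' be contributors where c' is obtained from c by packing one cycle of length ℓ into ℓ backsteps. Define the permanental sign sgn_P(x) = (-1)^{nc(x) + bs(x)}, where nc counts negative components and bs counts backsteps. Then sgn_P(c) = sgn_P(c'); in particular, all contributors of G have the same permanental sign (-1)^{|V|}, and the sum of sgn_P over all contributors equals (-1)^{|V|} times the number of contributors. -/
import Mathlib

private lemma pow_parity (a b : ℕ) (h : a % 2 = b % 2) : (-1 : ℤ) ^ a = (-1 : ℤ) ^ b := by
  conv_lhs => rw [← Nat.mod_add_div a 2]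
  conv_rhs => rw [← Nat.mod_add_div b 2]
  simp [pow_add, pow_mul, h]

private lemma filter_odd_card_parity (s : Multiset ℕ) :
    ((s.filter fun l => Odd l).card) % 2 = s.sum % 2 := by
  simp only [show (fun l => Odd l) = Odd from rfl]
  induction s using Multiset.induction with
  | empty => simp
  | cons a s ih =>
    by_cases h : Odd a
    · rw [Multiset.filter_cons_of_pos _ h, Multiset.card_cons, Multiset.sum_cons]
      have ha := Nat.odd_iff.mp h
      omega
    · rw [Multiset.filter_cons_of_neg _ h, Multiset.sum_cons, Nat.add_mod, ih,
        Nat.even_iff.mp (Nat.not_odd_iff_even.mp h), Nat.zero_add, Nat.mod_mod_of_dvd]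
      rfl

/-- In a signed graph all of whose adjacencies are negative (so a cycle of length `ℓ` is
negative exactly when `ℓ` is odd), consider contributors `c` on a vertex set of size `n`,
each consisting of a multiset `cyc c` of cycle lengths and `bs c` backsteps covering the `n`
vertices, with `nc c` the number of negative (odd-length) cycle components. Then:
packing a cycle of length `ℓ` into `ℓ` backsteps preserves the permanental sign
`sgn_P = (-1)^(nc + bs)`; every contributor has permanental sign `(-1)^n`; and the sum of the
permanental signs over all contributors is `(-1)^n` times the number of contributors. -/
theorem permanental_sign_constant (n : ℕ) (C : Type*) [Fintype C]
    (cyc : C → Multiset ℕ) (bs nc : C → ℕ)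
    (hcover : ∀ c, (cyc c).sum + bs c = n)
    (hnc : ∀ c, nc c = ((cyc c).filter fun l => Odd l).card) :
    (∀ ℓ ncc bsc : ℕ, 0 < ℓ →
        (-1 : ℤ) ^ ((ncc + if Odd ℓ then 1 else 0) + bsc) = (-1 : ℤ) ^ (ncc + (bsc + ℓ))) ∧
    (∀ c : C, (-1 : ℤ) ^ (nc c + bs c) = (-1 : ℤ) ^ n) ∧
    ∑ c : C, (-1 : ℤ) ^ (nc c + bs c) = (-1 : ℤ) ^ n * Fintype.card C := by
  have h2 : ∀ c : C, (-1 : ℤ) ^ (nc c + bs c) = (-1 : ℤ) ^ n := by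
    intro c
    apply pow_parity
    rw [← hcover c, hnc c, Nat.add_mod, filter_odd_card_parity, ← Nat.add_mod]
  refine ⟨?_, h2, ?_⟩
  · intro ℓ ncc bsc hℓ
    apply pow_parity
    by_cases h : Odd ℓ
    · have := Nat.odd_iff.mp h; simp only [if_pos h]; omega
    · have := Nat.even_iff.mp (Nat.not_odd_iff_even.mp h); simp only [if_neg h]; omega
  · simp [h2, mul_comm]
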